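/- Let Φ(ρ) = Σ_{i=1}^d M_i ρ M_i† be a quantum channel on a finite-dimensional Hilbert space with Kraus operators M_i, and let R be a channel satisfying R(M_i ρ M_i†) = Tr(M_i ρ M_i†) ρ for all i ≤ k, for a fixed density operator ρ. Then (1/2)‖(R∘Φ)(ρ) − ρ‖₁ ≤ ‖Σ_{i=k+1}^d M_i† M_i‖, where ‖·‖ is the operator norm. -/

import Mathlib

open Matrix
open scoped ComplexOrder

/-- The trace norm `‖A‖₁ = Tr √(AᴴA)` of a complex matrix. -/
noncomputable def traceNorm {ι : Type*} [Fintype ι] [DecidableEq ι]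
    (A : Matrix ι ι ℂ) : ℝ :=
  ((Matrix.posSemidef_conjTranspose_mul_self A).1.eigenvectorUnitary.1 *
    diagonal (((↑) : ℝ → ℂ) ∘ (√·) ∘ (Matrix.posSemidef_conjTranspose_mul_self A).1.eigenvalues) *
    (star (Matrix.posSemidef_conjTranspose_mul_self A).1.eigenvectorUnitary :
      Matrix ι ι ℂ)).trace.re

/-- The operator (spectral) norm of a complex matrix. -/
noncomputable def opNorm {ι : Type*} [Fintype ι] [DecidableEq ι]
    (A : Matrix ι ι ℂ) : ℝ :=
  ‖Matrix.toEuclideanCLM (𝕜 := ℂ) (n := ι) A‖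

section Aux

variable {ι : Type*} [Fintype ι] [DecidableEq ι]

open scoped MatrixOrder

lemma aux_traceNorm_eq (A : Matrix ι ι ℂ) :
    traceNorm A = (CFC.sqrt (Aᴴ * A)).trace.re := by
  rw [CFC.sqrt_eq_real_sqrt _ (Matrix.posSemidef_conjTranspose_mul_self A).nonneg, cfcₙ_eq_cfc,
    (Matrix.posSemidef_conjTranspose_mul_self A).1.cfc_eq, IsHermitian.cfc, Unitary.conjStarAlgAut_apply]
  rfl

lemma aux_psd_trace_nonneg {A : Matrix ι ι ℂ} (hA : A.PosSemidef) : 0 ≤ A.trace := by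
  rw [Matrix.trace]
  refine Finset.sum_nonneg fun i _ => ?_
  simpa [dotProduct, Pi.single_apply, apply_ite] using hA.dotProduct_mulVec_nonneg (Pi.single i 1)

lemma aux_nonneg_eq_re {z : ℂ} (hz : 0 ≤ z) : z = (z.re : ℂ) := by
  obtain ⟨h1, h2⟩ := Complex.le_def.mp hz
  exact Complex.ext rfl (by simpa using h2.symm)

lemma aux_nonneg_re_nonneg {z : ℂ} (hz : 0 ≤ z) : 0 ≤ z.re := (Complex.le_def.mp hz).1

lemma aux_psd_trace_mul_nonneg {P S : Matrix ι ι ℂ} (hP : P.PosSemidef) (hS : S.PosSemidef) :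
    0 ≤ (P * S).trace := by
  have key := aux_psd_trace_nonneg (hP.mul_mul_conjTranspose_same (CFC.sqrt S))
  rw [(CFC.sqrt_nonneg S).posSemidef.1.eq] at key
  have h1 : (P * S).trace = (CFC.sqrt S * P * CFC.sqrt S).trace := by
    rw [trace_mul_cycle, CFC.sqrt_mul_sqrt_self S hS.nonneg, trace_mul_comm]
  rwa [h1]

lemma aux_traceNorm_psd {A : Matrix ι ι ℂ} (hA : A.PosSemidef) :
    traceNorm A = A.trace.re := by
  have h : A = CFC.sqrt (Aᴴ * A) :=
    (CFC.sqrt_unique (by rw [hA.1.eq]) hA.nonneg).symm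
  rw [aux_traceNorm_eq, ← h]

lemma aux_trace_conj_unitary {V : Matrix ι ι ℂ} (hV1 : star V * V = 1)
    (X : Matrix ι ι ℂ) : (V * X * star V).trace = X.trace := by
  rw [trace_mul_cycle, hV1, Matrix.one_mul]

lemma aux_conj_mul {V : Matrix ι ι ℂ} (hV1 : star V * V = 1) (X Y : Matrix ι ι ℂ) :
    (V * X * star V) * (V * Y * star V) = V * (X * Y) * star V := by
  simp only [Matrix.mul_assoc]
  rw [← Matrix.mul_assoc (star V) V, hV1, Matrix.one_mul]

lemma aux_sum_mul_indicator_le {V P Q : Matrix ι ι ℂ} (hV1 : star V * V = 1)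
    (hV2 : V * star V = 1) (hP : P.PosSemidef) (hQ : Q.PosSemidef) (μ χ : ι → ℝ)
    (hχ0 : ∀ i, 0 ≤ χ i) (hχ1 : ∀ i, χ i ≤ 1)
    (hPQ : V * Matrix.diagonal (Complex.ofReal ∘ μ) * star V = P - Q) :
    ∑ i, μ i * χ i ≤ P.trace.re := by
  set Pr : Matrix ι ι ℂ := V * Matrix.diagonal (Complex.ofReal ∘ χ) * star V with hPrdef
  have hPr : Pr.PosSemidef := by
    rw [hPrdef, Matrix.star_eq_conjTranspose]
    exact (Matrix.PosSemidef.diagonal fun i => by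
      simpa using Complex.zero_le_real.mpr (hχ0 i)).mul_mul_conjTranspose_same V
  have h1Pr : (1 - Pr).PosSemidef := by
    have he : (1 : Matrix ι ι ℂ) - Pr
        = V * Matrix.diagonal (Complex.ofReal ∘ fun i => 1 - χ i) * star V := by
      have : Matrix.diagonal (Complex.ofReal ∘ fun i => 1 - χ i)
          = 1 - Matrix.diagonal (Complex.ofReal ∘ χ) := by
        ext i j
        by_cases h : i = j <;>
          simp [Matrix.diagonal_apply, Matrix.one_apply, h, Complex.ofReal_sub]
      rw [this, hPrdef]
      rw [Matrix.mul_sub, Matrix.mul_one, Matrix.sub_mul, hV2]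
    rw [he, Matrix.star_eq_conjTranspose]
    exact (Matrix.PosSemidef.diagonal fun i => by
      simpa using Complex.zero_le_real.mpr (sub_nonneg.mpr (hχ1 i))).mul_mul_conjTranspose_same V
  have htr : ((P - Q) * Pr).trace = ((∑ i, μ i * χ i : ℝ) : ℂ) := by
    rw [← hPQ, hPrdef]
    rw [aux_conj_mul hV1, aux_trace_conj_unitary hV1, Matrix.diagonal_mul_diagonal, Matrix.trace_diagonal]
    push_cast
    rfl
  have hQPr : 0 ≤ (Q * Pr).trace.re := aux_nonneg_re_nonneg (aux_psd_trace_mul_nonneg hQ hPr)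
  have hP1Pr : 0 ≤ (P * (1 - Pr)).trace.re :=
    aux_nonneg_re_nonneg (aux_psd_trace_mul_nonneg hP h1Pr)
  have hsub : ((P - Q) * Pr).trace = (P * Pr).trace - (Q * Pr).trace := by
    rw [Matrix.sub_mul, Matrix.trace_sub]
  have hsub2 : (P * (1 - Pr)).trace = P.trace - (P * Pr).trace := by
    rw [Matrix.mul_sub, Matrix.mul_one, Matrix.trace_sub]
  have h0 : ∑ i, μ i * χ i = (P * Pr).trace.re - (Q * Pr).trace.re := by
    have := congrArg Complex.re (htr.symm.trans hsub)
    simpa using this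
  have h1 : (P * Pr).trace.re ≤ P.trace.re := by
    have := congrArg Complex.re hsub2
    simp only [Complex.sub_re] at this
    linarith
  linarith

lemma aux_traceNorm_sub_le {P Q : Matrix ι ι ℂ} (hP : P.PosSemidef) (hQ : Q.PosSemidef) :
    traceNorm (P - Q) ≤ P.trace.re + Q.trace.re := by
  set D := P - Q with hDdef
  have hD : D.IsHermitian := hP.1.sub hQ.1
  set V : Matrix ι ι ℂ := (hD.eigenvectorUnitary : Matrix ι ι ℂ) with hVdef
  have hV2 : V * star V = 1 := (Matrix.mem_unitaryGroup_iff).mp hD.eigenvectorUnitary.2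
  have hV1 : star V * V = 1 := (Matrix.mem_unitaryGroup_iff').mp hD.eigenvectorUnitary.2
  set lam := hD.eigenvalues with hlam
  have hPQ : V * Matrix.diagonal (Complex.ofReal ∘ lam) * star V = D :=
    hD.spectral_theorem.symm
  -- trace norm equals sum of |eigenvalues|
  set Babs : Matrix ι ι ℂ := V * Matrix.diagonal (Complex.ofReal ∘ fun i => |lam i|) * star V
    with hBdef
  have hBabs : Babs.PosSemidef := by
    rw [hBdef, Matrix.star_eq_conjTranspose]
    exact (Matrix.PosSemidef.diagonal fun i => by
      simpa using Complex.zero_le_real.mpr (abs_nonneg (lam i))).mul_mul_conjTranspose_same V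
  have hsq : Babs ^ 2 = Dᴴ * D := by
    rw [hD.eq, pow_two, hBdef]
    conv_rhs => rw [← hPQ]
    rw [aux_conj_mul hV1, aux_conj_mul hV1, Matrix.diagonal_mul_diagonal,
      Matrix.diagonal_mul_diagonal]
    congr 2
    funext i
    simp only [Function.comp_apply, ← Complex.ofReal_mul, abs_mul_abs_self]
  have htn : traceNorm D = ∑ i, |lam i| := by
    have h : Babs = CFC.sqrt (Dᴴ * D) :=
      (CFC.sqrt_unique (by rw [← pow_two]; exact hsq) hBabs.nonneg).symm
    rw [aux_traceNorm_eq, ← h, hBdef, aux_trace_conj_unitary hV1, Matrix.trace_diagonal]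
    rw [show ∑ i, (Complex.ofReal ∘ fun i => |lam i|) i = ((∑ i, |lam i| : ℝ) : ℂ) by
      push_cast; rfl]
    simp
  have hPQ' : V * Matrix.diagonal (Complex.ofReal ∘ fun i => -lam i) * star V = Q - P := by
    have : Matrix.diagonal (Complex.ofReal ∘ fun i => -lam i)
        = -Matrix.diagonal (Complex.ofReal ∘ lam) := by
      ext i j
      by_cases h : i = j <;> simp [Matrix.diagonal_apply, h]
    rw [this, Matrix.mul_neg, Matrix.neg_mul, hPQ, hDdef, neg_sub]
  classical
  set χ : ι → ℝ := fun i => if 0 ≤ lam i then 1 else 0 with hχ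
  have h1 : ∑ i, lam i * χ i ≤ P.trace.re := by
    refine aux_sum_mul_indicator_le hV1 hV2 hP hQ lam χ ?_ ?_ (by rw [hPQ])
    · intro i; rw [hχ]; dsimp only; split <;> norm_num
    · intro i; rw [hχ]; dsimp only; split <;> norm_num
  have h2 : ∑ i, (-lam i) * (1 - χ i) ≤ Q.trace.re := by
    refine aux_sum_mul_indicator_le hV1 hV2 hQ hP (fun i => -lam i) (fun i => 1 - χ i)
      ?_ ?_ hPQ'
    · intro i; rw [hχ]; dsimp only; split <;> norm_num
    · intro i; rw [hχ]; dsimp only; split <;> norm_num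
  have habs : ∑ i, |lam i| = ∑ i, lam i * χ i + ∑ i, (-lam i) * (1 - χ i) := by
    rw [← Finset.sum_add_distrib]
    refine Finset.sum_congr rfl fun i _ => ?_
    rw [hχ]; dsimp only
    split
    · rename_i h; rw [abs_of_nonneg h]; ring
    · rename_i h; rw [abs_of_neg (lt_of_not_ge h)]; ring
  rw [htn, habs]
  linarith

lemma aux_trace_mul_le_opNorm {B ρ : Matrix ι ι ℂ} (hB : B.PosSemidef)
    (hρ : ρ.PosSemidef) (hρ1 : ρ.trace = 1) : (B * ρ).trace.re ≤ opNorm B := by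
  set c : ℝ := opNorm B with hc
  have hC : ((c : ℂ) • (1 : Matrix ι ι ℂ) - B).PosSemidef := by
    refine Matrix.PosSemidef.of_dotProduct_mulVec_nonneg ?_ ?_
    · show ((c : ℂ) • (1 : Matrix ι ι ℂ) - B)ᴴ = _
      rw [Matrix.conjTranspose_sub, Matrix.conjTranspose_smul, Matrix.conjTranspose_one,
        hB.1.eq, Complex.star_def, Complex.conj_ofReal]
    · intro x
      set x' : EuclideanSpace ℂ ι := (WithLp.equiv 2 _).symm x with hx'
      have hz : star x ⬝ᵥ (B *ᵥ x)
          = (inner ℂ x' (Matrix.toEuclideanCLM (𝕜 := ℂ) B x') : ℂ) := by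
          rw [EuclideanSpace.inner_eq_star_dotProduct, dotProduct_comm]; rfl
      have hxx : star x ⬝ᵥ x = ((‖x'‖ ^ 2 : ℝ) : ℂ) := by
        have := inner_self_eq_norm_sq_to_K (𝕜 := ℂ) x'
        rw [show star x ⬝ᵥ x = inner ℂ x' x' by
          rw [EuclideanSpace.inner_eq_star_dotProduct, dotProduct_comm]; rfl, this]
        norm_cast
      have hre : (star x ⬝ᵥ (B *ᵥ x)).re ≤ c * ‖x'‖ ^ 2 := by
        rw [hz]
        calc (inner ℂ x' (Matrix.toEuclideanCLM (𝕜 := ℂ) B x') : ℂ).re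
            ≤ ‖(inner ℂ x' (Matrix.toEuclideanCLM (𝕜 := ℂ) B x') : ℂ)‖ := Complex.re_le_norm _
          _ ≤ ‖x'‖ * ‖Matrix.toEuclideanCLM (𝕜 := ℂ) B x'‖ := norm_inner_le_norm _ _
          _ ≤ ‖x'‖ * (‖Matrix.toEuclideanCLM (𝕜 := ℂ) B‖ * ‖x'‖) := by
              gcongr; exact (Matrix.toEuclideanCLM (𝕜 := ℂ) B).le_opNorm x'
          _ = c * ‖x'‖ ^ 2 := by rw [hc, opNorm]; ring
      have hval : star x ⬝ᵥ (((c : ℂ) • (1 : Matrix ι ι ℂ) - B) *ᵥ x)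
          = (c : ℂ) * (star x ⬝ᵥ x) - star x ⬝ᵥ (B *ᵥ x) := by
        rw [Matrix.sub_mulVec, dotProduct_sub, Matrix.smul_mulVec, Matrix.one_mulVec,
          dotProduct_smul, smul_eq_mul]
      rw [hval, hxx, aux_nonneg_eq_re (hB.dotProduct_mulVec_nonneg x)]
      rw [show (c : ℂ) * ((‖x'‖ ^ 2 : ℝ) : ℂ) - (((star x ⬝ᵥ (B *ᵥ x)).re : ℝ) : ℂ)
          = ((c * ‖x'‖ ^ 2 - (star x ⬝ᵥ (B *ᵥ x)).re : ℝ) : ℂ) by push_cast; ring]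
      rw [Complex.zero_le_real]
      linarith
  have h := aux_nonneg_re_nonneg (aux_psd_trace_mul_nonneg hC hρ)
  have hcomp : (((c : ℂ) • (1 : Matrix ι ι ℂ) - B) * ρ).trace
      = (c : ℂ) - (B * ρ).trace := by
    rw [Matrix.sub_mul, Matrix.trace_sub, Matrix.smul_mul, Matrix.one_mul,
      Matrix.trace_smul, hρ1, smul_eq_mul, mul_one]
  rw [hcomp] at h
  simp only [Complex.sub_re, Complex.ofReal_re] at h
  linarith

end Aux

/-- let `Φ(ρ) = Σ_{i=1}^d M_i ρ M_i†` be a quantum channel with Kraus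
operators `M_i` (so `Σ M_i† M_i = I`), and `R` a channel (linear, trace-preserving,
positive) that perfectly recovers the errors `M_i` for `i ≤ k` on the state `ρ`:
`R(M_i ρ M_i†) = Tr(M_i ρ M_i†) ρ`.  Then
`(1/2)‖(R∘Φ)(ρ) − ρ‖₁ ≤ ‖Σ_{i=k+1}^d M_i† M_i‖`. -/
theorem stmt_9 {ι : Type*} [Fintype ι] [DecidableEq ι] (d k : ℕ) (hk : k ≤ d)
    (M : Fin d → Matrix ι ι ℂ) (hKraus : ∑ i, (M i)ᴴ * M i = 1)
    (ρ : Matrix ι ι ℂ) (hρ : ρ.PosSemidef) (hρ1 : ρ.trace = 1)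
    (R : Matrix ι ι ℂ →ₗ[ℂ] Matrix ι ι ℂ)
    (hRtr : ∀ X : Matrix ι ι ℂ, (R X).trace = X.trace)
    (hRpos : ∀ X : Matrix ι ι ℂ, X.PosSemidef → (R X).PosSemidef)
    (hRec : ∀ i : Fin d, (i : ℕ) < k →
      R (M i * ρ * (M i)ᴴ) = (M i * ρ * (M i)ᴴ).trace • ρ) :
    (1 / 2) * traceNorm (R (∑ i, M i * ρ * (M i)ᴴ) - ρ) ≤
      opNorm (∑ i ∈ Finset.univ.filter (fun i : Fin d => k ≤ (i : ℕ)),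
        (M i)ᴴ * M i) := by
  classical
  set T : Finset (Fin d) := Finset.univ.filter (fun i : Fin d => (i : ℕ) < k) with hT
  set Sf : Finset (Fin d) := Finset.univ.filter (fun i : Fin d => k ≤ (i : ℕ)) with hSf
  have hsplit : ∀ f : Fin d → Matrix ι ι ℂ, ∑ i, f i = (∑ i ∈ T, f i) + ∑ i ∈ Sf, f i := by
    intro f
    rw [← Finset.sum_filter_add_sum_filter_not Finset.univ (fun i : Fin d => (i : ℕ) < k) f]
    congr 1
    apply Finset.sum_congr _ (fun _ _ => rfl)
    apply Finset.filter_congr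
    intro i _
    simp [not_lt]
  set B : Matrix ι ι ℂ := ∑ i ∈ Sf, M i * ρ * (M i)ᴴ with hBdef
  have hB : B.PosSemidef := by
    rw [hBdef]
    refine Finset.sum_induction _ _ (fun a b ha hb => ha.add hb) .zero ?_
    intro i _
    exact hρ.mul_mul_conjTranspose_same (M i)
  have hcycle : ∀ s : Finset (Fin d),
      (∑ i ∈ s, M i * ρ * (M i)ᴴ).trace = ((∑ i ∈ s, (M i)ᴴ * M i) * ρ).trace := by
    intro s
    rw [Matrix.trace_sum, Finset.sum_mul, Matrix.trace_sum]
    exact Finset.sum_congr rfl fun i _ => (Matrix.trace_mul_cycle (M i) ρ (M i)ᴴ).trans rfl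
  have htr1 : (∑ i, M i * ρ * (M i)ᴴ).trace = 1 := by
    rw [hcycle Finset.univ, hKraus, Matrix.one_mul, hρ1]
  set c : ℂ := B.trace with hcdef
  have hc0 : 0 ≤ c := aux_psd_trace_nonneg hB
  have hTtr : ∑ i ∈ T, (M i * ρ * (M i)ᴴ).trace = 1 - c := by
    have h2 := htr1
    rw [hsplit (fun i => M i * ρ * (M i)ᴴ), Matrix.trace_add, ← hBdef] at h2
    rw [← Matrix.trace_sum]
    linear_combination h2
  have hRφ : R (∑ i, M i * ρ * (M i)ᴴ) = (1 - c) • ρ + R B := by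
    rw [hsplit (fun i => M i * ρ * (M i)ᴴ), map_add, map_sum]
    congr 1
    rw [show ∑ i ∈ T, R (M i * ρ * (M i)ᴴ) = ∑ i ∈ T, (M i * ρ * (M i)ᴴ).trace • ρ from
      Finset.sum_congr rfl fun i hi => hRec i (by simpa [hT] using hi)]
    rw [← Finset.sum_smul, hTtr]
  have hDeq : R (∑ i, M i * ρ * (M i)ᴴ) - ρ = R B - c • ρ := by
    rw [hRφ, sub_smul, one_smul]
    abel
  rw [hDeq]
  -- positive semidefiniteness of c • ρ
  have hcρ : (c • ρ).PosSemidef := by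
    rw [aux_nonneg_eq_re hc0]
    refine Matrix.PosSemidef.of_dotProduct_mulVec_nonneg ?_ ?_
    · show ((c.re : ℂ) • ρ)ᴴ = _
      rw [Matrix.conjTranspose_smul, hρ.1.eq, Complex.star_def, Complex.conj_ofReal]
    · intro x
      rw [Matrix.smul_mulVec, dotProduct_smul, smul_eq_mul]
      exact mul_nonneg (Complex.zero_le_real.mpr (aux_nonneg_re_nonneg hc0)) (hρ.dotProduct_mulVec_nonneg x)
  have hbound := aux_traceNorm_sub_le (hRpos B hB) hcρ
  have htrRB : (R B).trace = c := by rw [hRtr, hcdef]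
  have htrcρ : (c • ρ).trace = c := by rw [Matrix.trace_smul, hρ1, smul_eq_mul, mul_one]
  rw [htrRB, htrcρ] at hbound
  have hfinal : c.re ≤ opNorm (∑ i ∈ Sf, (M i)ᴴ * M i) := by
    have hSpsd : (∑ i ∈ Sf, (M i)ᴴ * M i).PosSemidef := by
      refine Finset.sum_induction _ _ (fun a b ha hb => ha.add hb) .zero ?_
      intro i _
      exact Matrix.posSemidef_conjTranspose_mul_self (M i)
    have := aux_trace_mul_le_opNorm hSpsd hρ hρ1
    rw [hcdef, hcycle Sf]
    exact this
  linarith
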